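/- Let L be a straight line in ℝ². For any p₁, p₂ ∈ L with p₁ ≠ p₂ and any p̃₁, p̃₂ ∈ L with p̃₁ ≠ p̃₂, there exists an affine transformation H : ℝ² → ℝ² (an invertible affine map) such that H ∘ D_p = D_{p̃}, where p = (p₁, p₂) and p̃ = (p̃₁, p̃₂). -/

import Mathlib

noncomputable section

abbrev E2 := EuclideanSpace ℝ (Fin 2)

/-- The distance-squared mapping `D_p : ℝ² → ℝ²` associated to `p = (p₁, p₂)`. -/
def Dp (p₁ p₂ : E2) (x : E2) : E2 :=
  (EuclideanSpace.equiv (Fin 2) ℝ).symm ![‖x - p₁‖ ^ 2, ‖x - p₂‖ ^ 2]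

def mk2 (y z : ℝ) : E2 := (EuclideanSpace.equiv (Fin 2) ℝ).symm ![y, z]

@[simp] lemma mk2_zero (y z : ℝ) : mk2 y z 0 = y := rfl
@[simp] lemma mk2_one (y z : ℝ) : mk2 y z 1 = z := rfl

lemma Dp_zero (p₁ p₂ x : E2) : Dp p₁ p₂ x 0 = ‖x - p₁‖ ^ 2 := rfl
lemma Dp_one (p₁ p₂ x : E2) : Dp p₁ p₂ x 1 = ‖x - p₂‖ ^ 2 := rfl

def lmap (A B C D : ℝ) : E2 →ₗ[ℝ] E2 where
  toFun x := mk2 (A * x 0 + B * x 1) (C * x 0 + D * x 1)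
  map_add' x y := by
    ext i; fin_cases i <;> simp [mk2] <;> ring
  map_smul' r x := by
    ext i; fin_cases i <;> simp [mk2] <;> ring

def lequiv (A B C D : ℝ) (h : A * D - B * C ≠ 0) : E2 ≃ₗ[ℝ] E2 :=
  LinearEquiv.ofLinear (lmap A B C D)
    (lmap (D / (A*D - B*C)) (-B / (A*D - B*C)) (-C / (A*D - B*C)) (A / (A*D - B*C)))
    (by ext x i; fin_cases i <;> simp [lmap, mk2] <;> [linear_combination (x 0) * mul_inv_cancel₀ h; linear_combination (x 1) * mul_inv_cancel₀ h])
    (by ext x i; fin_cases i <;> simp [lmap, mk2] <;> [linear_combination (x 0) * mul_inv_cancel₀ h; linear_combination (x 1) * mul_inv_cancel₀ h])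

@[simp] lemma lequiv_apply (A B C D : ℝ) (h : A * D - B * C ≠ 0) (x : E2) :
    lequiv A B C D h x = mk2 (A * x 0 + B * x 1) (C * x 0 + D * x 1) := rfl

theorem stmt7 (a v : E2) (hv : v ≠ 0)
    (L : Set E2) (hL : L = {x : E2 | ∃ s : ℝ, x = a + s • v})
    (p₁ p₂ q₁ q₂ : E2)
    (hp₁ : p₁ ∈ L) (hp₂ : p₂ ∈ L) (hq₁ : q₁ ∈ L) (hq₂ : q₂ ∈ L)
    (hp : p₁ ≠ p₂) (hq : q₁ ≠ q₂) :
    ∃ H : E2 ≃ᵃ[ℝ] E2, ∀ x : E2, H (Dp p₁ p₂ x) = Dp q₁ q₂ x := by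
  subst hL
  obtain ⟨s₁, hs₁⟩ := hp₁
  obtain ⟨s₂, hs₂⟩ := hp₂
  obtain ⟨t₁, ht₁⟩ := hq₁
  obtain ⟨t₂, ht₂⟩ := hq₂
  have hs : s₁ ≠ s₂ := by
    intro h; apply hp; rw [hs₁, hs₂, h]
  have ht : t₁ ≠ t₂ := by
    intro h; apply hq; rw [ht₁, ht₂, h]
  have hs' : s₁ - s₂ ≠ 0 := sub_ne_zero.mpr hs
  have ht' : t₁ - t₂ ≠ 0 := sub_ne_zero.mpr ht
  set A := (t₁ - s₂) / (s₁ - s₂) with hA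
  set B := (s₁ - t₁) / (s₁ - s₂) with hB
  set C := (t₂ - s₂) / (s₁ - s₂) with hC
  set D := (s₁ - t₂) / (s₁ - s₂) with hD
  have hdet : A * D - B * C ≠ 0 := by
    have : A * D - B * C = (t₁ - t₂) / (s₁ - s₂) := by
      rw [hA, hB, hC, hD]; field_simp; ring
    rw [this]
    exact div_ne_zero ht' hs'
  set f := lequiv A B C D hdet with hf
  set w : E2 := Dp q₁ q₂ a - f (Dp p₁ p₂ a) with hw
  refine ⟨(f.toAffineEquiv).trans (AffineEquiv.constVAdd ℝ E2 w), ?_⟩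
  intro x
  have key : ∀ y : E2, f y 0 = A * y 0 + B * y 1 ∧ f y 1 = C * y 0 + D * y 1 := by
    intro y; exact ⟨rfl, rfl⟩
  have comp : ∀ i : Fin 2, (w + f (Dp p₁ p₂ x)) i = Dp q₁ q₂ x i := by
    have expand : ∀ (z : E2) (s : ℝ), ‖z - (a + s • v)‖ ^ 2 =
        ‖z‖ ^ 2 - 2 * inner ℝ z a - 2 * s * inner ℝ z v + (‖a‖ ^ 2 + 2 * s * inner ℝ a v + s ^ 2 * ‖v‖ ^ 2) := by
      intro z s
      rw [norm_sub_sq_real]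
      rw [inner_add_right, real_inner_smul_right]
      rw [norm_add_sq_real, real_inner_smul_right, norm_smul]
      simp [mul_pow]
      ring
    have h0 : (w + f (Dp p₁ p₂ x)) 0 = Dp q₁ q₂ x 0 := by
      simp only [PiLp.add_apply, hw, PiLp.sub_apply, (key _).1, Dp_zero, Dp_one,
        hs₁, hs₂, ht₁, ht₂, expand, hA, hB]
      field_simp
      ring
    have h1 : (w + f (Dp p₁ p₂ x)) 1 = Dp q₁ q₂ x 1 := by
      simp only [PiLp.add_apply, hw, PiLp.sub_apply, (key _).2, Dp_zero, Dp_one,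
        hs₁, hs₂, ht₁, ht₂, expand, hC, hD]
      field_simp
      ring
    intro i
    fin_cases i
    · exact h0
    · exact h1
  show w +ᵥ f (Dp p₁ p₂ x) = Dp q₁ q₂ x
  ext i
  exact comp i
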